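/- For all positive integers k and n, every ℂ-linear endomorphism φ of W_{k,n} that commutes with the action of S_n (i.e., φ ∘ ρ(g) = ρ(g) ∘ φ for all g ∈ S_n, where ρ(g) is the operator (ρ(g) f)(I) = f(g⁻¹ ∘ I)) lies in the ℂ-linear span of the operators T_P, as P ranges over all set partitions of Fin k ⊕ Fin k. (Surjectivity of the partition algebra map Φ_{k,n}.) -/

import Mathlib

/-!
Formalization of statements from "Stable characters from permutation patterns"
by C. Gaetz and C. Ryba.
-/

open scoped Classical

noncomputable section

/-- A word `I` (with values in a linear order `M`) is `σ`-sorted: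
`I a < I b` if and only if `σ a < σ b`. -/
def IsSorted {k : ℕ} {M : Type*} [LinearOrder M] (σ : Fin k → Fin k) (I : Fin k → M) : Prop :=
  ∀ a b : Fin k, I a < I b ↔ σ a < σ b

/-- `N_σ(g)`: the number of strictly increasing words `I : Fin k → Fin n` such that
`g ∘ I` is `σ`-sorted, i.e. the number of occurrences of the pattern `σ` in `g`. -/
def patCount (k n : ℕ) (σ : Fin k → Fin k) (g : Equiv.Perm (Fin n)) : ℕ :=
  Nat.card {I : Fin k → Fin n // StrictMono I ∧ IsSorted σ (⇑g ∘ I)}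

/-- `m_i(g)`: the number of cycles of length `i` in the cycle decomposition of `g`,
where fixed points count as cycles of length 1. -/
def cycleCount {n : ℕ} (g : Equiv.Perm (Fin n)) (i : ℕ) : ℕ :=
  if i = 1 then Nat.card {x : Fin n // g x = x} else Multiset.count i g.cycleType

/-- `W k n`: the space of `ℂ`-valued functions on words, a model of the `k`-th tensor power
of the permutation representation of `S_n`. -/
abbrev W (k n : ℕ) := (Fin k → Fin n) → ℂ

/-- The labelling `ℓ_{J,I}` of `Fin k ⊕ Fin k` determined by the words `J` and `I`:
unprimed vertices (`inl`) get labels from `J`, primed vertices (`inr`) from `I`. -/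
def label {k n : ℕ} (J I : Fin k → Fin n) : Fin k ⊕ Fin k → Fin n := Sum.elim J I

/-- `C_P(J, I)`: equal to `1` if the labelling `ℓ_{J,I}` is constant on every part of the
set partition `P` (i.e. every part is monochromatic), and `0` otherwise. -/
def CP {k n : ℕ} (P : Setoid (Fin k ⊕ Fin k)) (J I : Fin k → Fin n) : ℂ :=
  if ∀ a b, P.r a b → label J I a = label J I b then 1 else 0

/-- `C'_P(J, I)`: equal to `1` if the labelling `ℓ_{J,I}` is constant on every part of `P`
and takes distinct values on distinct parts of `P`, and `0` otherwise. -/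
def CP' {k n : ℕ} (P : Setoid (Fin k ⊕ Fin k)) (J I : Fin k → Fin n) : ℂ :=
  if (∀ a b, P.r a b → label J I a = label J I b) ∧
      (∀ a b, ¬ P.r a b → label J I a ≠ label J I b) then 1 else 0

/-- The operator `T_P : W_{k,n} → W_{k,n}`, `(T_P f)(J) = Σ_I C_P(J,I) f(I)`. -/
def TP (k n : ℕ) (P : Setoid (Fin k ⊕ Fin k)) : W k n →ₗ[ℂ] W k n :=
  Matrix.mulVecLin (Matrix.of fun J I => CP P J I)

/-- The operator `T'_P : W_{k,n} → W_{k,n}`, `(T'_P f)(J) = Σ_I C'_P(J,I) f(I)`. -/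
def TP' (k n : ℕ) (P : Setoid (Fin k ⊕ Fin k)) : W k n →ₗ[ℂ] W k n :=
  Matrix.mulVecLin (Matrix.of fun J I => CP' P J I)

/-- The action `ρ(g)` of `S_n` on `W k n`: `(ρ(g) f)(I) = f(g⁻¹ ∘ I)`. -/
def rho (k n : ℕ) (g : Equiv.Perm (Fin n)) : W k n →ₗ[ℂ] W k n where
  toFun f := fun I => f (⇑g⁻¹ ∘ I)
  map_add' _ _ := rfl
  map_smul' _ _ := rfl

/-- The map `E_σ : ℂ → W_{k,n}` sending `1` to the sum of `v_I` over `σ`-sorted words `I`. -/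
def Esig (k n : ℕ) (σ : Fin k → Fin k) : ℂ →ₗ[ℂ] W k n where
  toFun c := fun I => if IsSorted σ I then c else 0
  map_add' a b := by
    funext I; by_cases h : IsSorted σ I <;> simp [h]
  map_smul' a b := by
    funext I; by_cases h : IsSorted σ I <;> simp [h]

/-- The transpose map `E_σ^T : W_{k,n} → ℂ`, `f ↦ Σ_{I σ-sorted} f(I)`. -/
def EsigT (k n : ℕ) (σ : Fin k → Fin k) : W k n →ₗ[ℂ] ℂ where
  toFun f := ∑ I ∈ Finset.univ.filter (fun I : Fin k → Fin n => IsSorted σ I), f I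
  map_add' f g := Finset.sum_add_distrib
  map_smul' c f := by simp [Finset.mul_sum]

/-- There are finitely many set partitions (equivalence relations) on a finite type. -/
noncomputable instance {α : Type*} [Finite α] : Fintype (Setoid α) := by
  have : Finite (Setoid α) :=
    Finite.of_injective (fun s : Setoid α => s.r)
      (fun s t h => by cases s; cases t; cases h; rfl)
  exact Fintype.ofFinite _

namespace PartitionAux

variable {k n : ℕ}

/-- The kernel setoid of the labelling `ℓ_{J,I}`. -/
def kerL (J I : Fin k → Fin n) : Setoid (Fin k ⊕ Fin k) := Setoid.ker (label J I)

lemma CP'_eq (P : Setoid (Fin k ⊕ Fin k)) (J I : Fin k → Fin n) :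
    CP' P J I = if P = kerL J I then 1 else 0 := by
  unfold CP'
  by_cases h : P = kerL J I
  · subst h
    rw [if_pos rfl, if_pos]
    exact ⟨fun a b hab => hab, fun a b hab => hab⟩
  · rw [if_neg h, if_neg]
    rintro ⟨h1, h2⟩
    exact h (Setoid.ext fun a b =>
      ⟨h1 a b, fun hl => by_contra fun hq => h2 a b hq hl⟩)

lemma CP_eq_sum (P : Setoid (Fin k ⊕ Fin k)) (J I : Fin k → Fin n) :
    CP P J I = ∑ Q ∈ Finset.univ.filter (fun Q => P ≤ Q), CP' Q J I := by
  have : ∀ Q ∈ Finset.univ.filter (fun Q : Setoid (Fin k ⊕ Fin k) => P ≤ Q),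
      CP' Q J I = if Q = kerL J I then 1 else 0 := fun Q _ => CP'_eq Q J I
  rw [Finset.sum_congr rfl this, Finset.sum_ite_eq' _ (kerL J I) (fun _ => (1 : ℂ))]
  unfold CP
  by_cases h : P ≤ kerL J I
  · rw [if_pos (Finset.mem_filter.mpr ⟨Finset.mem_univ _, h⟩), if_pos]
    exact fun a b hab => Setoid.le_def.mp h hab
  · rw [if_neg (fun hm => h (Finset.mem_filter.mp hm).2), if_neg]
    intro hc
    exact h (Setoid.le_def.mpr fun {a b} hab => hc a b hab)

lemma TP_eq_sum (P : Setoid (Fin k ⊕ Fin k)) :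
    TP k n P = ∑ Q ∈ Finset.univ.filter (fun Q => P ≤ Q), TP' k n Q := by
  apply LinearMap.ext; intro f; funext J
  have lhs : TP k n P f J = ∑ I, CP P J I * f I := rfl
  have rhs : (∑ Q ∈ Finset.univ.filter (fun Q => P ≤ Q), TP' k n Q) f J
      = ∑ Q ∈ Finset.univ.filter (fun Q => P ≤ Q), ∑ I, CP' Q J I * f I := by
    rw [LinearMap.sum_apply, Finset.sum_apply]
    exact Finset.sum_congr rfl fun Q _ => rfl
  rw [lhs, rhs, Finset.sum_comm]
  congr 1; funext I
  rw [← Finset.sum_mul, ← CP_eq_sum]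

lemma TP'_mem_span (Q : Setoid (Fin k ⊕ Fin k)) :
    TP' k n Q ∈ Submodule.span ℂ
      (Set.range fun P : Setoid (Fin k ⊕ Fin k) => TP k n P) := by
  have wf : WellFounded ((· > ·) : Setoid (Fin k ⊕ Fin k) → _ → Prop) :=
    (Finite.to_wellFoundedGT).wf
  refine wf.induction (C := fun Q => TP' k n Q ∈ Submodule.span ℂ
      (Set.range fun P : Setoid (Fin k ⊕ Fin k) => TP k n P)) Q ?_
  intro Q ih
  have hsplit : Finset.univ.filter (fun R => Q ≤ R)
      = insert Q (Finset.univ.filter (fun R : Setoid (Fin k ⊕ Fin k) => Q < R)) := by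
    ext R
    simp only [Finset.mem_filter, Finset.mem_univ, true_and, Finset.mem_insert]
    constructor
    · intro h
      rcases lt_or_eq_of_le h with h' | h'
      · exact Or.inr h'
      · exact Or.inl h'.symm
    · rintro (rfl | h)
      · exact le_refl _
      · exact le_of_lt h
  have hnot : Q ∉ Finset.univ.filter (fun R : Setoid (Fin k ⊕ Fin k) => Q < R) := by
    simp [lt_irrefl]
  have hTP : TP k n Q = TP' k n Q
      + ∑ R ∈ Finset.univ.filter (fun R : Setoid (Fin k ⊕ Fin k) => Q < R), TP' k n R := by
    rw [TP_eq_sum, hsplit, Finset.sum_insert hnot]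
  have : TP' k n Q = TP k n Q
      - ∑ R ∈ Finset.univ.filter (fun R : Setoid (Fin k ⊕ Fin k) => Q < R), TP' k n R := by
    rw [hTP]; abel
  rw [this]
  exact sub_mem (Submodule.subset_span ⟨Q, rfl⟩)
    (Submodule.sum_mem _ fun R hR => ih R (Finset.mem_filter.mp hR).2)

lemma exists_perm {α β : Type*} [Fintype β] [DecidableEq β] (f f' : α → β)
    (h : ∀ a b, f a = f b ↔ f' a = f' b) : ∃ g : Equiv.Perm β, ∀ a, g (f a) = f' a := by
  classical
  let t : {x // x ∈ Set.range f} → {x // x ∈ Set.range f'} :=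
    fun y => ⟨f' y.2.choose, Set.mem_range_self _⟩
  have hbij : Function.Bijective t := by
    constructor
    · intro y1 y2 ht
      have h2 := (h _ _).mpr (Subtype.ext_iff.mp ht)
      exact Subtype.ext (y1.2.choose_spec ▸ y2.2.choose_spec ▸ h2)
    · rintro ⟨y', a, rfl⟩
      exact ⟨⟨f a, a, rfl⟩, Subtype.ext ((h _ _).mp (⟨a, rfl⟩ : f a ∈ Set.range f).choose_spec)⟩
  let e := Equiv.ofBijective t hbij
  refine ⟨e.extendSubtype, fun a => ?_⟩
  rw [Equiv.extendSubtype_apply_of_mem e (f a) ⟨a, rfl⟩]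
  exact (h _ _).mp (Exists.choose_spec (⟨a, rfl⟩ : ∃ b, f b = f a))

/-- Coefficient of `T'_Q` in the expansion of `φ`. -/
def coeff (k n : ℕ) (φ : W k n →ₗ[ℂ] W k n) (Q : Setoid (Fin k ⊕ Fin k)) : ℂ :=
  if h : ∃ p : (Fin k → Fin n) × (Fin k → Fin n), kerL p.1 p.2 = Q
  then φ (Pi.single h.choose.2 1) h.choose.1 else 0

lemma TP'_single (Q : Setoid (Fin k ⊕ Fin k)) (I J : Fin k → Fin n) :
    TP' k n Q (Pi.single I 1) J = CP' Q J I := by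
  simp only [TP', Matrix.mulVecLin_apply, Matrix.mulVec, dotProduct, Matrix.of_apply,
    Pi.single_apply, mul_ite, mul_one, mul_zero]
  rw [Finset.sum_ite_eq' Finset.univ I (fun I' => CP' Q J I'), if_pos (Finset.mem_univ _)]

end PartitionAux

/-- Every `ℂ`-linear endomorphism of `W_{k,n}` commuting with the `S_n`-action
lies in the linear span of the operators `T_P` (surjectivity of `Φ_{k,n}`). -/


theorem partition_algebra_map_surjective (k n : ℕ) (hk : 0 < k) (hn : 0 < n)
    (φ : W k n →ₗ[ℂ] W k n)
    (hφ : ∀ g : Equiv.Perm (Fin n), φ ∘ₗ rho k n g = rho k n g ∘ₗ φ) :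
    φ ∈ Submodule.span ℂ (Set.range fun P : Setoid (Fin k ⊕ Fin k) => TP k n P) := by
  open PartitionAux in
  have rho_single : ∀ (g : Equiv.Perm (Fin n)) (I : Fin k → Fin n),
      rho k n g (Pi.single I 1) = Pi.single (⇑g ∘ I) 1 := by
    intro g I; funext J
    simp only [rho, LinearMap.coe_mk, AddHom.coe_mk, Pi.single_apply]
    have hiff : (⇑g⁻¹ ∘ J = I) ↔ (J = ⇑g ∘ I) := by
      constructor
      · intro h; rw [← h]; funext x; simp
      · intro h; rw [h]; funext x; simp
    rw [if_congr hiff rfl rfl]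
  have Minv : ∀ (g : Equiv.Perm (Fin n)) (J I : Fin k → Fin n),
      φ (Pi.single (⇑g ∘ I) 1) (⇑g ∘ J) = φ (Pi.single I 1) J := by
    intro g J I
    have h1 := congrFun (LinearMap.congr_fun (hφ g) (Pi.single I 1)) (⇑g ∘ J)
    simp only [LinearMap.comp_apply, rho_single] at h1
    rw [h1]
    show φ (Pi.single I 1) (⇑g⁻¹ ∘ (⇑g ∘ J)) = φ (Pi.single I 1) J
    have harg : ⇑g⁻¹ ∘ (⇑g ∘ J) = J := by funext x; simp
    rw [harg]
  have hc : ∀ J I : Fin k → Fin n,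
      PartitionAux.coeff k n φ (PartitionAux.kerL J I) = φ (Pi.single I 1) J := by
    intro J I
    have hex : ∃ p : (Fin k → Fin n) × (Fin k → Fin n),
        PartitionAux.kerL p.1 p.2 = PartitionAux.kerL J I := ⟨(J, I), rfl⟩
    rw [PartitionAux.coeff, dif_pos hex]
    have main : ∀ (p : (Fin k → Fin n) × (Fin k → Fin n)),
        PartitionAux.kerL p.1 p.2 = PartitionAux.kerL J I →
        φ (Pi.single p.2 1) p.1 = φ (Pi.single I 1) J := by
      rintro ⟨J₀, I₀⟩ hp
      have hk' : ∀ a b, label J₀ I₀ a = label J₀ I₀ b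
          ↔ label J I a = label J I b := fun a b => Setoid.ext_iff.mp hp a b
      obtain ⟨g, hg⟩ := PartitionAux.exists_perm _ _ hk'
      have hJ : ⇑g ∘ J₀ = J := funext fun r => hg (Sum.inl r)
      have hI : ⇑g ∘ I₀ = I := funext fun r => hg (Sum.inr r)
      show φ (Pi.single I₀ 1) J₀ = φ (Pi.single I 1) J
      rw [← hJ, ← hI]
      exact (Minv g J₀ I₀).symm
    exact main hex.choose hex.choose_spec
  have hdec : ∀ f : W k n, f = ∑ I : Fin k → Fin n, f I • (Pi.single I 1 : W k n) := by
    intro f; funext J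
    rw [Finset.sum_apply]
    have hterm : ∀ I, (f I • (Pi.single I 1 : W k n)) J = if J = I then f I else 0 := by
      intro I
      rw [Pi.smul_apply, Pi.single_apply, smul_eq_mul]
      by_cases h : J = I <;> simp [h]
    rw [Finset.sum_congr rfl fun I _ => hterm I, Finset.sum_ite_eq Finset.univ J f,
      if_pos (Finset.mem_univ _)]
  have key : φ = ∑ Q : Setoid (Fin k ⊕ Fin k), PartitionAux.coeff k n φ Q • TP' k n Q := by
    apply LinearMap.ext; intro f
    conv_lhs => rw [hdec f]
    conv_rhs => rw [hdec f]
    rw [map_sum, map_sum]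
    refine Finset.sum_congr rfl fun I _ => ?_
    rw [map_smul, map_smul]
    congr 1
    funext J
    have rhs : (∑ Q : Setoid (Fin k ⊕ Fin k), PartitionAux.coeff k n φ Q • TP' k n Q)
        (Pi.single I 1) J
        = ∑ Q : Setoid (Fin k ⊕ Fin k), PartitionAux.coeff k n φ Q * CP' Q J I := by
      rw [LinearMap.sum_apply, Finset.sum_apply]
      refine Finset.sum_congr rfl fun Q _ => ?_
      rw [LinearMap.smul_apply, Pi.smul_apply, PartitionAux.TP'_single, smul_eq_mul]
    rw [rhs]
    have : ∀ Q ∈ (Finset.univ : Finset (Setoid (Fin k ⊕ Fin k))),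
        PartitionAux.coeff k n φ Q * CP' Q J I
          = if Q = PartitionAux.kerL J I then PartitionAux.coeff k n φ Q else 0 := by
      intro Q _
      rw [PartitionAux.CP'_eq]
      by_cases h : Q = PartitionAux.kerL J I <;> simp [h]
    rw [Finset.sum_congr rfl this, Finset.sum_ite_eq' Finset.univ (PartitionAux.kerL J I),
      if_pos (Finset.mem_univ _), hc]
  rw [key]
  exact Submodule.sum_mem _ fun Q _ =>
    Submodule.smul_mem _ _ (PartitionAux.TP'_mem_span Q)
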